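/- With n sensors placed independently and uniformly at random in [0,1], each with radio range r_s(n) = (c log n)/n for sufficiently large constant c, and M arbitrarily placed transmitters, the probability that the recovered whitespace A_void satisfies 1 - A_void ≤ 3M·(c log n)/n tends to 1 as n → ∞. -/

import Mathlib

open MeasureTheory ProbabilityTheory Filter Set ENNReal


lemma cover_exists (K : ℕ) (hK : 1 ≤ K) {x : ℝ} (hx : x ∈ Icc (0:ℝ) 1) :
    ∃ k < K, x ∈ Icc ((k:ℝ)/K) (((k:ℝ)+1)/K) := by
  obtain ⟨hx0, hx1⟩ := hx
  have hKpos : (0:ℝ) < K := by exact_mod_cast hK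
  set k := min ⌊x * K⌋₊ (K-1) with hk
  have hkK : k < K := by
    have : K - 1 < K := by omega
    exact lt_of_le_of_lt (min_le_right _ _) this
  refine ⟨k, hkK, ?_, ?_⟩
  · -- k/K ≤ x
    have h1 : (k:ℝ) ≤ ⌊x * K⌋₊ := by exact_mod_cast min_le_left _ _
    have h2 : (⌊x * K⌋₊ : ℝ) ≤ x * K := Nat.floor_le (by positivity)
    rw [div_le_iff₀ hKpos]
    linarith
  · -- x ≤ (k+1)/K
    rw [le_div_iff₀ hKpos]
    rcases le_or_gt ⌊x * K⌋₊ (K-1) with h | h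
    · have hkeq : k = ⌊x * K⌋₊ := min_eq_left h
      have := Nat.lt_floor_add_one (x * K)
      rw [hkeq]
      push_cast
      linarith
    · have hkeq : k = K - 1 := min_eq_right (le_of_lt h)
      have : ((k:ℝ) + 1) = K := by
        rw [hkeq]
        have : K - 1 + 1 = K := by omega
        exact_mod_cast congrArg (Nat.cast (R := ℝ)) this
      rw [this]
      nlinarith

lemma det_bound {M n : ℕ} (t : Fin M → ℝ) (x : Fin n → ℝ) (r : ℝ) (hr : 0 < r)
    (K : ℕ) (hK1 : 1 ≤ K) (hKr : (1:ℝ)/K ≤ r/2)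
    (hcov : ∀ k < K, ∃ i, x i ∈ Icc ((k:ℝ)/K) (((k:ℝ)+1)/K)) :
    1 - (volume (⋃ i ∈ {i : Fin n | ¬ ∃ j, |x i - t j| ≤ r},
        Icc (x i - r) (x i + r) ∩ Icc (0:ℝ) 1)).toReal ≤ 3 * M * r := by
  classical
  set U := ⋃ i ∈ {i : Fin n | ¬ ∃ j, |x i - t j| ≤ r},
      Icc (x i - r) (x i + r) ∩ Icc (0:ℝ) 1 with hU
  set V := ⋃ j, Icc (t j - 3*r/2) (t j + 3*r/2) with hV
  have hKpos : (0:ℝ) < K := by exact_mod_cast hK1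
  -- coverage
  have hsub : Icc (0:ℝ) 1 ⊆ U ∪ V := by
    intro x0 hx0
    by_cases hx0V : x0 ∈ V
    · exact Or.inr hx0V
    · left
      have hfar : ∀ j, 3*r/2 < |x0 - t j| := by
        intro j
        by_contra h
        push_neg at h
        apply hx0V
        rw [hV, mem_iUnion]
        exact ⟨j, by rw [abs_sub_le_iff] at h; constructor <;> [linarith [h.1]; linarith [h.2]]⟩
      obtain ⟨k, hkK, hxk⟩ := cover_exists K hK1 hx0
      obtain ⟨i, hik⟩ := hcov k hkK
      have hclose : |x i - x0| ≤ r/2 := by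
        refine le_trans ?_ hKr
        rw [abs_sub_le_iff]
        have h1 : ((k:ℝ)+1)/K - (k:ℝ)/K = 1/K := by field_simp; ring
        constructor <;> [linarith [hik.1, hik.2, hxk.1, hxk.2]; linarith [hik.1, hik.2, hxk.1, hxk.2]]
      rw [hU, mem_iUnion₂]
      refine ⟨i, ?_, ?_, hx0⟩
      · intro ⟨j, hj⟩
        have := hfar j
        have := abs_sub_abs_le_abs_sub (x0 - t j) (x i - t j)
        have h2 : |x0 - t j - (x i - t j)| = |x0 - x i| := by ring_nf
        rw [abs_sub_comm] at hclose
        have h3 : |x0 - t j| ≤ |x i - t j| + |x0 - x i| := by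
          calc |x0 - t j| = |(x i - t j) + (x0 - x i)| := by ring_nf
          _ ≤ |x i - t j| + |x0 - x i| := abs_add_le _ _
        linarith
      · constructor
        · rw [abs_sub_le_iff] at hclose; linarith [hclose.1]
        · rw [abs_sub_le_iff] at hclose; linarith [hclose.2]
  -- volume bounds
  have hUsub : U ⊆ Icc (0:ℝ) 1 := by
    rw [hU]; exact iUnion₂_subset fun i _ => inter_subset_right
  have hUfin : volume U ≤ 1 := by
    calc volume U ≤ volume (Icc (0:ℝ) 1) := measure_mono hUsub
    _ = 1 := by simp [Real.volume_Icc]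
  have hVle : volume V ≤ (M : ℝ≥0∞) * ENNReal.ofReal (3*r) := by
    calc volume V ≤ ∑' j : Fin M, volume (Icc (t j - 3*r/2) (t j + 3*r/2)) :=
          measure_iUnion_le _
    _ = ∑ j : Fin M, volume (Icc (t j - 3*r/2) (t j + 3*r/2)) := tsum_fintype _
    _ = ∑ j : Fin M, ENNReal.ofReal (3*r) := by
          refine Finset.sum_congr rfl fun j _ => ?_
          rw [Real.volume_Icc]
          congr 1
          ring
    _ = (M : ℝ≥0∞) * ENNReal.ofReal (3*r) := by
          rw [Finset.sum_const, Finset.card_univ, Fintype.card_fin, nsmul_eq_mul]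
  have key : (1 : ℝ≥0∞) ≤ volume U + ENNReal.ofReal (3*M*r) := by
    calc (1:ℝ≥0∞) = volume (Icc (0:ℝ) 1) := by simp [Real.volume_Icc]
    _ ≤ volume (U ∪ V) := measure_mono hsub
    _ ≤ volume U + volume V := measure_union_le _ _
    _ ≤ volume U + (M : ℝ≥0∞) * ENNReal.ofReal (3*r) := by gcongr
    _ = volume U + ENNReal.ofReal (3*M*r) := by
          congr 1
          rw [← ENNReal.ofReal_natCast M, ← ENNReal.ofReal_mul (by positivity)]
          congr 1
          ring
  have hne : volume U + ENNReal.ofReal (3*M*r) ≠ ⊤ := by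
    refine ENNReal.add_ne_top.mpr ⟨?_, ENNReal.ofReal_ne_top⟩
    exact ne_top_of_le_ne_top one_ne_top hUfin
  have := ENNReal.toReal_mono hne key
  rw [ENNReal.toReal_one, ENNReal.toReal_add (ne_top_of_le_ne_top one_ne_top hUfin)
    ENNReal.ofReal_ne_top, ENNReal.toReal_ofReal (by positivity)] at this
  linarith

lemma prob_miss {Ω : Type*} [MeasurableSpace Ω] (P : Measure Ω) [IsProbabilityMeasure P]
    {n : ℕ} (X : Fin n → Ω → ℝ) (hmeas : ∀ i, Measurable (X i))
    (hunif : ∀ i, Measure.map (X i) P = volume.restrict (Icc (0:ℝ) 1))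
    (hindep : iIndepFun X P)
    {K : ℕ} (hK1 : 1 ≤ K) {k : ℕ} (hk : k < K) :
    P (⋂ i, X i ⁻¹' (Icc ((k:ℝ)/K) (((k:ℝ)+1)/K))ᶜ) = (1 - ENNReal.ofReal (1/(K:ℝ)))^n := by
  have hKpos : (0:ℝ) < K := by exact_mod_cast hK1
  set I : Set ℝ := Icc ((k:ℝ)/K) (((k:ℝ)+1)/K) with hI
  have hImeas : MeasurableSet Iᶜ := measurableSet_Icc.compl
  have heq : (⋂ i, X i ⁻¹' Iᶜ) = ⋂ i ∈ (Finset.univ : Finset (Fin n)), X i ⁻¹' Iᶜ := by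
    simp
  rw [heq, hindep.measure_inter_preimage_eq_mul Finset.univ (fun i _ => hImeas)]
  have hfac : ∀ i, P (X i ⁻¹' Iᶜ) = 1 - ENNReal.ofReal (1/(K:ℝ)) := by
    intro i
    rw [← Measure.map_apply (hmeas i) hImeas, hunif i, Measure.restrict_apply hImeas]
    have h1 : Iᶜ ∩ Icc (0:ℝ) 1 = Icc (0:ℝ) 1 \ I := by
      rw [diff_eq, inter_comm]
    have hIsub : I ⊆ Icc (0:ℝ) 1 := by
      apply Icc_subset_Icc
      · positivity
      · rw [div_le_one hKpos]
        have : (k:ℝ) + 1 ≤ K := by exact_mod_cast hk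
        linarith
    have hIfin : volume I ≠ ⊤ := by
      rw [hI, Real.volume_Icc]; exact ENNReal.ofReal_ne_top
    rw [h1, measure_diff hIsub measurableSet_Icc.nullMeasurableSet hIfin]
    rw [Real.volume_Icc, Real.volume_Icc]
    congr 1
    · norm_num
    · congr 1
      field_simp
      ring
  calc ∏ i : Fin n, P (X i ⁻¹' Iᶜ) = ∏ _i : Fin n, (1 - ENNReal.ofReal (1/(K:ℝ))) :=
        Finset.prod_congr rfl fun i _ => hfac i
  _ = (1 - ENNReal.ofReal (1/(K:ℝ)))^n := by
        rw [Finset.prod_const, Finset.card_univ, Fintype.card_fin]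

lemma decay (c : ℝ) (hc : 6 ≤ c) :
    Tendsto (fun n : ℕ => (n:ℝ) * Real.exp (-(c/3) * Real.log n)) atTop (nhds 0) := by
  have h1 : Tendsto (fun n : ℕ => (1 - c/3) * Real.log n) atTop atBot := by
    refine Tendsto.const_mul_atTop_of_neg (by linarith) ?_
    exact Real.tendsto_log_atTop.comp tendsto_natCast_atTop_atTop
  have h2 : Tendsto (fun n : ℕ => Real.exp ((1 - c/3) * Real.log n)) atTop (nhds 0) :=
    Real.tendsto_exp_atBot.comp h1
  refine h2.congr' ?_
  filter_upwards [eventually_ge_atTop 1] with n hn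
  have hnpos : (0:ℝ) < n := by exact_mod_cast hn
  rw [sub_mul, one_mul, Real.exp_sub, Real.exp_log hnpos]
  rw [neg_mul, Real.exp_neg]
  rw [div_eq_mul_inv]

theorem whitespace_recovery_reliable
    {Ω : Type*} [MeasurableSpace Ω] (P : Measure Ω) [IsProbabilityMeasure P]
    (X : (n : ℕ) → Fin n → Ω → ℝ)
    (hmeas : ∀ n i, Measurable (X n i))
    (hunif : ∀ n i, Measure.map (X n i) P = volume.restrict (Set.Icc (0:ℝ) 1))
    (hindep : ∀ n, iIndepFun (X n) P)
    (M : ℕ) (t : Fin M → ℝ) (ht : ∀ j, t j ∈ Set.Icc (0:ℝ) 1) :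
    ∃ c₀ : ℝ, 0 < c₀ ∧ ∀ c : ℝ, c₀ ≤ c →
      Tendsto
        (fun n : ℕ =>
          P {ω | 1 -
              (volume (⋃ i ∈ {i : Fin n | ¬ ∃ j, |X n i ω - t j| ≤ c * Real.log n / n},
                  Set.Icc (X n i ω - c * Real.log n / n) (X n i ω + c * Real.log n / n)
                    ∩ Set.Icc (0:ℝ) 1)).toReal
            ≤ 3 * M * (c * Real.log n / n)})
        atTop (nhds 1) := by
  classical
  refine ⟨6, by norm_num, fun c hc => ?_⟩
  set S : ℕ → Set Ω := fun n => {ω | 1 -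
      (volume (⋃ i ∈ {i : Fin n | ¬ ∃ j, |X n i ω - t j| ≤ c * Real.log n / n},
          Set.Icc (X n i ω - c * Real.log n / n) (X n i ω + c * Real.log n / n)
            ∩ Set.Icc (0:ℝ) 1)).toReal
    ≤ 3 * M * (c * Real.log n / n)} with hS
  -- small radius eventually
  have hrto : Tendsto (fun n : ℕ => c * Real.log n / n) atTop (nhds 0) := by
    have h0 : Tendsto (fun x : ℝ => Real.log x ^ 1 / (1 * x + 0)) atTop (nhds 0) :=
      Real.tendsto_pow_log_div_mul_add_atTop 1 0 1 one_ne_zero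
    have h1 : Tendsto (fun x : ℝ => c * (Real.log x / x)) atTop (nhds (c * 0)) := by
      refine Tendsto.const_mul c (h0.congr fun x => ?_)
      simp
    have h2 := h1.comp tendsto_natCast_atTop_atTop (α := ℕ)
    simpa [mul_div_assoc, Function.comp_def] using h2
  have hEr : ∀ᶠ n : ℕ in atTop, c * Real.log n / n ≤ 1 :=
    hrto.eventually (eventually_le_nhds (by norm_num))
  -- the bad-event bound
  have hSc : ∀ᶠ n : ℕ in atTop, P (S n)ᶜ ≤
      ENNReal.ofReal ((n:ℝ) * Real.exp (-(c/3) * Real.log n)) := by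
    filter_upwards [hEr, eventually_ge_atTop 3] with n hr1 hn3
    -- basic facts
    have hnpos : (0:ℝ) < n := by positivity
    have hlog1 : 1 ≤ Real.log n := by
      have h3 : Real.exp 1 ≤ 3 := by
        have := Real.exp_one_lt_d9
        linarith
      have : Real.exp 1 ≤ (n:ℝ) := le_trans h3 (by exact_mod_cast hn3)
      calc (1:ℝ) = Real.log (Real.exp 1) := (Real.log_exp 1).symm
      _ ≤ Real.log n := Real.log_le_log (Real.exp_pos 1) this
    have hcpos : (0:ℝ) < c := by linarith
    set r : ℝ := c * Real.log n / n with hrdef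
    have hrpos : 0 < r := by
      apply div_pos (mul_pos hcpos (by linarith)) hnpos
    set K : ℕ := ⌈2 / r⌉₊ with hKdef
    have hK1 : 1 ≤ K := Nat.ceil_pos.mpr (by positivity)
    have hKposR : (0:ℝ) < K := by exact_mod_cast hK1
    have hKge : 2 / r ≤ (K:ℝ) := Nat.le_ceil _
    have hKr : 1 / (K:ℝ) ≤ r / 2 := by
      rw [div_le_div_iff₀ hKposR (by norm_num)]
      have : 2 ≤ (K:ℝ) * r := by
        rw [div_le_iff₀ hrpos] at hKge
        linarith
      linarith
    have hK3r : (K:ℝ) ≤ 3 / r := by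
      have h1 : (K:ℝ) < 2 / r + 1 := Nat.ceil_lt_add_one (by positivity)
      have h2 : (1:ℝ) ≤ 1 / r := by
        rw [le_div_iff₀ hrpos]; linarith
      have : 2 / r + 1 ≤ 3 / r := by
        have : (3:ℝ)/r = 2/r + 1/r := by ring
        linarith [this]
      linarith
    have hKn : K ≤ n := by
      rw [hKdef, Nat.ceil_le]
      rw [div_le_iff₀ hrpos, hrdef]
      have : (n:ℝ) * (c * Real.log ↑n / ↑n) = c * Real.log n := by
        field_simp
      rw [this]
      nlinarith
    -- intervals
    set I : ℕ → Set ℝ := fun k => Set.Icc ((k:ℝ)/K) (((k:ℝ)+1)/K) with hI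
    set bad : Set Ω := ⋃ k ∈ Finset.range K, ⋂ i, X n i ⁻¹' (I k)ᶜ with hbad
    -- deterministic inclusion
    have hsub : (S n)ᶜ ⊆ bad := by
      rw [compl_subset_comm]
      intro ω hω
      have hcov : ∀ k < K, ∃ i, X n i ω ∈ I k := by
        intro k hk
        by_contra hno
        push_neg at hno
        apply hω
        rw [hbad, Set.mem_iUnion₂]
        exact ⟨k, Finset.mem_range.mpr hk, Set.mem_iInter.mpr fun i => hno i⟩
      exact det_bound t (fun i => X n i ω) r hrpos K hK1 hKr hcov
    -- probability bound
    calc P (S n)ᶜ ≤ P bad := measure_mono hsub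
    _ ≤ ∑ k ∈ Finset.range K, P (⋂ i, X n i ⁻¹' (I k)ᶜ) := by
          rw [hbad]; exact measure_biUnion_finset_le _ _
    _ = ∑ _k ∈ Finset.range K, (1 - ENNReal.ofReal (1/(K:ℝ)))^n := by
          refine Finset.sum_congr rfl fun k hk => ?_
          exact prob_miss P (X n) (hmeas n) (hunif n) (hindep n) hK1
            (Finset.mem_range.mp hk)
    _ = (K : ℝ≥0∞) * (1 - ENNReal.ofReal (1/(K:ℝ)))^n := by
          rw [Finset.sum_const, Finset.card_range, nsmul_eq_mul]
    _ ≤ ENNReal.ofReal ((n:ℝ) * Real.exp (-(c/3) * Real.log n)) := by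
          have hinv1 : 1/(K:ℝ) ≤ 1 := by
            rw [div_le_one hKposR]; exact_mod_cast hK1
          have e1 : (1 : ℝ≥0∞) - ENNReal.ofReal (1/(K:ℝ))
              = ENNReal.ofReal (1 - 1/(K:ℝ)) := by
            rw [ENNReal.ofReal_sub 1 (by positivity), ENNReal.ofReal_one]
          rw [e1, ← ENNReal.ofReal_pow (by linarith), ← ENNReal.ofReal_natCast K,
            ← ENNReal.ofReal_mul (by positivity)]
          apply ENNReal.ofReal_le_ofReal
          -- real-number estimate
          have hb0 : (0:ℝ) ≤ 1 - 1/(K:ℝ) := by linarith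
          have t1 : (1 - 1/(K:ℝ))^n ≤ Real.exp (-(c/3) * Real.log n) := by
            have e2 : (1 - 1/(K:ℝ))^n ≤ Real.exp (-(1/(K:ℝ)))^n := by
              apply pow_le_pow_left₀ hb0
              have := Real.add_one_le_exp (-(1/(K:ℝ)))
              linarith
            refine le_trans e2 ?_
            rw [← Real.exp_nat_mul]
            apply Real.exp_le_exp.mpr
            have hrK : r / 3 ≤ 1 / (K:ℝ) := by
              have hKr3 : (K:ℝ) * r ≤ 3 := (le_div_iff₀ hrpos).mp hK3r
              rw [div_le_div_iff₀ (by norm_num) hKposR]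
              nlinarith
            have hnr : (n:ℝ) * (r/3) = (c/3) * Real.log n := by
              rw [hrdef]; field_simp
            nlinarith [hrK, hnr, hnpos]
          exact mul_le_mul (by exact_mod_cast hKn) t1 (by positivity) (by positivity)
  -- conclude
  have hbad0 : Tendsto (fun n => P (S n)ᶜ) atTop (nhds 0) := by
    have htop : Tendsto (fun n : ℕ =>
        ENNReal.ofReal ((n:ℝ) * Real.exp (-(c/3) * Real.log n))) atTop (nhds 0) := by
      have := ENNReal.tendsto_ofReal (decay c hc)
      simpa using this
    exact tendsto_of_tendsto_of_tendsto_of_le_of_le' tendsto_const_nhds htop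
      (Eventually.of_forall fun n => zero_le) hSc
  have hlow : ∀ n, 1 - P (S n)ᶜ ≤ P (S n) := by
    intro n
    rw [tsub_le_iff_right]
    calc (1:ℝ≥0∞) = P Set.univ := measure_univ.symm
    _ = P (S n ∪ (S n)ᶜ) := by rw [Set.union_compl_self]
    _ ≤ P (S n) + P (S n)ᶜ := measure_union_le _ _
  have hlowtend : Tendsto (fun n => 1 - P (S n)ᶜ) atTop (nhds 1) := by
    have := ENNReal.Tendsto.sub (tendsto_const_nhds :
      Tendsto (fun _ : ℕ => (1:ℝ≥0∞)) atTop (nhds 1)) hbad0 (Or.inl ENNReal.one_ne_top)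
    simpa using this
  show Tendsto (fun n => P (S n)) atTop (nhds 1)
  exact tendsto_of_tendsto_of_tendsto_of_le_of_le hlowtend tendsto_const_nhds
    hlow (fun n => prob_le_one)
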